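/- Let G be a graph, u and v distinct vertices of G, and let (G', B) be the biased graph obtained by identifying u and v to a single vertex w and declaring a cycle of G' balanced exactly when it does not use both an edge formerly incident to u and an edge formerly incident to v. Then F(G', B) = M(G), the cycle matroid of G. -/

import Mathlib

/-! Common definitions: multigraphs, walks, biased graphs, frame matroids. -/

universe u v

structure Multigraph (V : Type u) (E : Type v) where
  inc : E → Sym2 V

namespace Multigraph

variable {V : Type u} {E : Type v}

/-- An edge is a loop if its two endpoints coincide. -/
def IsLoop (G : Multigraph V E) (e : E) : Prop := (G.inc e).IsDiag

/-- The set of links (non-loop edges) incident to a vertex. -/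
def delta (G : Multigraph V E) (x : V) : Set E := {e | x ∈ G.inc e ∧ ¬ G.IsLoop e}

/-- The set of all edges (including loops) incident to a vertex. -/
def deltaPlus (G : Multigraph V E) (x : V) : Set E := {e | x ∈ G.inc e}

/-- The set of vertices incident with an edge of `X`. -/
def VSet (G : Multigraph V E) (X : Set E) : Set V := {x | ∃ e ∈ X, x ∈ G.inc e}

/-- Walks in a multigraph. -/
inductive Walk (G : Multigraph V E) : V → V → Type (max u v) where
  | nil (x : V) : Walk G x x
  | cons {x y z : V} (e : E) (h : G.inc e = s(x, y)) (t : Walk G y z) : Walk G x z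

namespace Walk

variable {G : Multigraph V E}

/-- The list of edges of a walk. -/
def edgeList : {x y : V} → G.Walk x y → List E
  | _, _, .nil _ => []
  | _, _, .cons e _ t => e :: t.edgeList

/-- The list of vertices of a walk (both endpoints included). -/
def vertList : {x y : V} → G.Walk x y → List V
  | _, _, .nil a => [a]
  | a, _, .cons _ _ t => a :: t.vertList

/-- The edge set of a walk. -/
def edgeSet {x y : V} (w : G.Walk x y) : Set E := {e | e ∈ w.edgeList}

/-- A walk is a path if it repeats no vertex. -/
def IsPath {x y : V} (w : G.Walk x y) : Prop := w.vertList.Nodup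

/-- A closed walk is a cycle if it is nonempty, repeats no edge and repeats
no vertex except for its starting vertex.  (A loop gives a cycle of length one.) -/
def IsCycle {x : V} (w : G.Walk x x) : Prop :=
  w.edgeList ≠ [] ∧ w.edgeList.Nodup ∧ w.vertList.dropLast.Nodup

end Walk

/-- `P` is the edge set of a path from `x` to `y`. -/
def IsPathSet (G : Multigraph V E) (x y : V) (P : Set E) : Prop :=
  ∃ w : G.Walk x y, w.IsPath ∧ w.edgeSet = P

/-- `C` is the edge set of a cycle. -/
def IsCycleSet (G : Multigraph V E) (C : Set E) : Prop :=
  ∃ (x : V) (w : G.Walk x x), w.IsCycle ∧ w.edgeSet = C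

/-- Two vertices are connected using only edges of `X`. -/
def ConnectedTo (G : Multigraph V E) (X : Set E) (x y : V) : Prop :=
  ∃ w : G.Walk x y, w.edgeSet ⊆ X

/-- A multigraph is connected if any two vertices are joined by a walk. -/
def ConnectedGraph (G : Multigraph V E) : Prop := ∀ x y : V, Nonempty (G.Walk x y)

/-- The subgraph induced by an edge set `X` is connected. -/
def SubConnected (G : Multigraph V E) (X : Set E) : Prop :=
  ∀ e ∈ X, ∀ f ∈ X, ∃ x y, x ∈ G.inc e ∧ y ∈ G.inc f ∧ G.ConnectedTo X x y

/-- A theta subgraph: two distinct vertices joined by three internally disjoint paths. -/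
def IsTheta (G : Multigraph V E) (x y : V) (P₁ P₂ P₃ : Set E) : Prop :=
  x ≠ y ∧ G.IsPathSet x y P₁ ∧ G.IsPathSet x y P₂ ∧ G.IsPathSet x y P₃ ∧
    Disjoint P₁ P₂ ∧ Disjoint P₂ P₃ ∧ Disjoint P₁ P₃ ∧
    G.VSet P₁ ∩ G.VSet P₂ ⊆ {x, y} ∧ G.VSet P₂ ∩ G.VSet P₃ ⊆ {x, y} ∧
    G.VSet P₁ ∩ G.VSet P₃ ⊆ {x, y}

/-- A proper separation of a multigraph, given as a partition of the edge set:
each side must contain a vertex not met by the other side. -/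
def IsProperSep (G : Multigraph V E) (X Y : Set E) : Prop :=
  X ∪ Y = Set.univ ∧ Disjoint X Y ∧
    (G.VSet X \ G.VSet Y).Nonempty ∧ (G.VSet Y \ G.VSet X).Nonempty

/-- A multigraph is `k`-connected if it is connected and every proper separation
has order at least `k`. -/
def KConnected (G : Multigraph V E) (k : ℕ) : Prop :=
  G.ConnectedGraph ∧ ∀ X Y : Set E, G.IsProperSep X Y → k ≤ (G.VSet X ∩ G.VSet Y).ncard

/-- The connected component of the edge `e` in the subgraph induced by `X`. -/
def edgeComponent (G : Multigraph V E) (X : Set E) (e : E) : Set E :=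
  {f | f ∈ X ∧ ∃ x y, x ∈ G.inc e ∧ y ∈ G.inc f ∧ G.ConnectedTo X x y}

/-- The set of connected components (as edge sets) of the subgraph induced by `X`. -/
def components (G : Multigraph V E) (X : Set E) : Set (Set E) :=
  {D | ∃ e ∈ X, D = G.edgeComponent X e}

/-- One step of rerouting a `u`-`v` path: replace a subpath `R` (with endpoints `x,y`)
of `P` by an `x`-`y` path `Q` that is internally disjoint from `P`. -/
def RerouteStep (G : Multigraph V E) (u v : V) (P P' : Set E) : Prop :=
  G.IsPathSet u v P ∧ G.IsPathSet u v P' ∧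
    ∃ x y R Q, G.IsPathSet x y R ∧ G.IsPathSet x y Q ∧ R ⊆ P ∧
      Disjoint Q (P \ R) ∧ G.VSet Q ∩ G.VSet P ⊆ {x, y} ∧ P' = (P \ R) ∪ Q

end Multigraph
namespace Multigraph
namespace Walk

variable {V : Type u} {E : Type v} {G : Multigraph V E}

theorem auxVertNeNil {x y : V} (w : G.Walk x y) : w.vertList ≠ [] := by
  cases w <;> simp [vertList]

theorem auxVertCons {x y : V} (w : G.Walk x y) : ∃ l, w.vertList = x :: l := by
  cases w with
  | nil => exact ⟨[], rfl⟩
  | cons e h t => exact ⟨t.vertList, rfl⟩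

theorem auxVertConcat {x y : V} (w : G.Walk x y) : ∃ l, w.vertList = l ++ [y] := by
  induction w with
  | nil a => exact ⟨[], rfl⟩
  | cons e h t ih =>
    rename_i x₀ y₀ z₀
    obtain ⟨l, hl⟩ := ih
    exact ⟨x₀ :: l, by simp [vertList, hl]⟩

theorem auxLenVert {x y : V} (w : G.Walk x y) : w.vertList.length = w.edgeList.length + 1 := by
  induction w with
  | nil a => rfl
  | cons e h t ih => simp [vertList, edgeList, ih]

theorem auxEqOfEdgeNil {x y : V} (w : G.Walk x y) (h : w.edgeList = []) : x = y := by
  cases w with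
  | nil => rfl
  | cons e h' t => simp [edgeList] at h

theorem auxMemVert {x y : V} (w : G.Walk x y) {e : E} (he : e ∈ w.edgeList) {z : V}
    (hz : z ∈ G.inc e) : z ∈ w.vertList := by
  induction w with
  | nil a => simp [edgeList] at he
  | cons e' h' t ih =>
    rw [edgeList, List.mem_cons] at he
    rcases he with rfl | he'
    · rw [h', Sym2.mem_iff] at hz
      rcases hz with rfl | rfl
      · simp [vertList]
      · obtain ⟨l, hl⟩ := auxVertCons t
        simp [vertList, hl]
    · rw [vertList, List.mem_cons]
      exact Or.inr (ih he')

theorem auxExistsEdge {x y : V} (w : G.Walk x y) (hne : w.edgeList ≠ []) {z : V}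
    (hz : z ∈ w.vertList) : ∃ e ∈ w.edgeList, z ∈ G.inc e := by
  induction w with
  | nil a => simp [edgeList] at hne
  | cons e h t ih =>
    rw [vertList, List.mem_cons] at hz
    rcases hz with rfl | hz'
    · exact ⟨e, List.mem_cons_self .., by rw [h]; exact Sym2.mem_mk_left ..⟩
    · cases t with
      | nil =>
        simp only [vertList, List.mem_singleton] at hz'
        subst hz'
        exact ⟨e, List.mem_cons_self .., by rw [h]; exact Sym2.mem_mk_right ..⟩
      | cons e₂ h₂ t₂ =>
        obtain ⟨g, hg, hzg⟩ := ih (by simp [edgeList]) hz'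
        exact ⟨g, List.mem_cons_of_mem _ hg, hzg⟩

def append : {x y z : V} → G.Walk x y → G.Walk y z → G.Walk x z
  | _, _, _, .nil _, q => q
  | _, _, _, .cons e h t, q => .cons e h (t.append q)

theorem edgeList_append {x y z : V} (p : G.Walk x y) (q : G.Walk y z) :
    (p.append q).edgeList = p.edgeList ++ q.edgeList := by
  induction p with
  | nil a => rfl
  | cons e h t ih => simp [append, edgeList, ih]

theorem vertList_append {x y z : V} (p : G.Walk x y) (q : G.Walk y z) :
    (p.append q).vertList = p.vertList.dropLast ++ q.vertList := by
  induction p with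
  | nil a =>
    obtain ⟨l, hl⟩ := auxVertCons q
    simp [append, vertList]
  | cons e h t ih =>
    simp [append, vertList, ih, List.dropLast_cons_of_ne_nil (auxVertNeNil t)]

def reverse : {x y : V} → G.Walk x y → G.Walk y x
  | _, _, .nil a => .nil a
  | x, _, .cons e h t => t.reverse.append (.cons e (h.trans (Sym2.eq_swap)) (.nil x))

theorem edgeList_reverse {x y : V} (w : G.Walk x y) : w.reverse.edgeList = w.edgeList.reverse := by
  induction w with
  | nil a => rfl
  | cons e h t ih => simp [reverse, edgeList_append, edgeList, ih]

theorem vertList_reverse {x y : V} (w : G.Walk x y) : w.reverse.vertList = w.vertList.reverse := by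
  induction w with
  | nil a => rfl
  | cons e h t ih =>
    obtain ⟨l, hl⟩ := auxVertCons t
    simp [reverse, vertList_append, vertList, ih, hl]

theorem auxSplit {x y : V} (w : G.Walk x y) {z : V} (hz : z ∈ w.vertList) :
    ∃ (w₁ : G.Walk x z) (w₂ : G.Walk z y),
      w₁.edgeList ++ w₂.edgeList = w.edgeList ∧
      w₁.vertList.dropLast ++ w₂.vertList = w.vertList := by
  induction w with
  | nil a =>
    simp only [vertList, List.mem_singleton] at hz
    subst hz
    exact ⟨.nil _, .nil _, rfl, rfl⟩
  | cons e h t ih =>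
    rename_i x₀ y₀ z₀
    by_cases hx : z = x₀
    · subst hx
      exact ⟨.nil _, .cons e h t, rfl, rfl⟩
    · have hz' : z ∈ t.vertList := by
        rw [vertList, List.mem_cons] at hz
        exact hz.resolve_left hx
      obtain ⟨w₁, w₂, hE, hV⟩ := ih hz'
      refine ⟨.cons e h w₁, w₂, by simp [edgeList, hE], ?_⟩
      simp only [vertList, List.dropLast_cons_of_ne_nil (auxVertNeNil w₁), List.cons_append, hV]

theorem auxRotate {x : V} (w : G.Walk x x) {z : V} (hz : z ∈ w.vertList) :
    ∃ w' : G.Walk z z, w'.edgeList.Perm w.edgeList ∧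
      w'.vertList.dropLast.Perm w.vertList.dropLast := by
  obtain ⟨w₁, w₂, hE, hV⟩ := auxSplit w hz
  refine ⟨w₂.append w₁, ?_, ?_⟩
  · rw [edgeList_append, ← hE]
    exact List.perm_append_comm
  · rw [vertList_append, ← hV,
      List.dropLast_append_of_ne_nil (auxVertNeNil w₁),
      List.dropLast_append_of_ne_nil (auxVertNeNil w₂)]
    exact List.perm_append_comm

theorem auxPathEdgeNodup {x y : V} (w : G.Walk x y) (hw : w.IsPath) : w.edgeList.Nodup := by
  induction w with
  | nil a => simp [edgeList]
  | cons e h t ih =>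
    rw [IsPath, vertList, List.nodup_cons] at hw
    refine List.nodup_cons.2 ⟨fun he => ?_, ih hw.2⟩
    exact hw.1 (auxMemVert t he (by rw [h]; exact Sym2.mem_mk_left ..))

theorem auxEdgeAtStart {x y : V} (w : G.Walk x y) (hw : w.IsPath) {e f : E}
    (he : e ∈ w.edgeList) (hf : f ∈ w.edgeList) (hxe : x ∈ G.inc e) (hxf : x ∈ G.inc f) :
    e = f := by
  cases w with
  | nil => simp [edgeList] at he
  | cons e₀ h t =>
    rw [IsPath, vertList, List.nodup_cons] at hw
    have key : ∀ g ∈ (Walk.cons e₀ h t).edgeList, x ∈ G.inc g → g = e₀ := by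
      intro g hg hxg
      rw [edgeList, List.mem_cons] at hg
      rcases hg with rfl | hg'
      · rfl
      · exact absurd (auxMemVert t hg' hxg) hw.1
    rw [key e he hxe, key f hf hxf]

theorem auxPathNotDiag {x y : V} (w : G.Walk x y) (hw : w.IsPath) {e : E}
    (he : e ∈ w.edgeList) : ¬ (G.inc e).IsDiag := by
  induction w with
  | nil a => simp [edgeList] at he
  | cons e₀ h t ih =>
    rw [IsPath, vertList, List.nodup_cons] at hw
    rw [edgeList, List.mem_cons] at he
    rcases he with rfl | he'
    · rw [h]
      intro hd
      rw [Sym2.mk_isDiag_iff] at hd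
      subst hd
      obtain ⟨l, hl⟩ := auxVertCons t
      exact hw.1 (by rw [hl]; exact List.mem_cons_self ..)
    · exact ih hw.2 he'

theorem auxMap {G' : Multigraph V E} (g : V → V) {x y : V} (w : G.Walk x y)
    (h : ∀ e ∈ w.edgeList, G'.inc e = Sym2.map g (G.inc e)) :
    ∃ w' : G'.Walk (g x) (g y), w'.edgeList = w.edgeList ∧ w'.vertList = w.vertList.map g := by
  induction w with
  | nil a => exact ⟨.nil _, rfl, rfl⟩
  | cons e he t ih =>
    rename_i x₀ y₀ z₀
    obtain ⟨t', hE, hV⟩ := ih (fun e' he' => h e' (List.mem_cons_of_mem _ he'))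
    have hinc' : G'.inc e = s(g x₀, g y₀) := by
      rw [h e (List.mem_cons_self ..), he, Sym2.map_pair_eq]
    exact ⟨.cons e hinc' t', by simp [edgeList, hE], by simp [vertList, hV]⟩

theorem auxSym2Exists (s : Sym2 V) : ∃ a b, s = s(a, b) := by
  induction s using Sym2.ind with
  | _ a b => exact ⟨a, b, rfl⟩

theorem auxCycleStructure {z : V} (w : G.Walk z z) (hw : w.IsCycle) :
    ∃ int : List V, w.vertList = z :: int ++ [z] ∧ z ∉ int ∧ int.Nodup := by
  obtain ⟨l, hl⟩ := auxVertConcat w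
  obtain ⟨l₂, hl₂⟩ := auxVertCons w
  have hdl : w.vertList.dropLast = l := by rw [hl]; exact List.dropLast_concat ..
  have hnd : l.Nodup := hdl ▸ hw.2.2
  have h2 : 2 ≤ w.vertList.length := by
    rw [auxLenVert w]
    have h1 : w.edgeList ≠ [] := hw.1
    have : 0 < w.edgeList.length := List.length_pos_iff.2 h1
    omega
  match l, hl, hnd with
  | [], hl, _ => rw [hl] at h2; simp at h2
  | a :: l', hl, hnd =>
    have hza : z :: l₂ = a :: (l' ++ [z]) := by rw [← hl₂, hl]; simp
    have haz : z = a := (List.cons_eq_cons.1 hza).1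
    subst haz
    rw [List.nodup_cons] at hnd
    exact ⟨l', by rw [hl], hnd.1, hnd.2⟩

theorem auxDecomp {a b : V} (w : G.Walk a b) (hab : a ≠ b) :
    ∃ m, w.vertList = a :: m ++ [b] := by
  obtain ⟨l, hl⟩ := auxVertConcat w
  obtain ⟨l₂, hl₂⟩ := auxVertCons w
  match l, hl with
  | [], hl =>
    rw [hl₂] at hl
    simp only [List.nil_append] at hl
    have : a = b := (List.cons_eq_cons.1 hl).1
    exact absurd this hab
  | c :: l', hl =>
    have hca : a :: l₂ = c :: (l' ++ [b]) := by rw [← hl₂, hl]; simp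
    have : a = c := (List.cons_eq_cons.1 hca).1
    subst this
    exact ⟨l', by rw [hl]⟩

end Walk
end Multigraph

namespace Multigraph
namespace Walk

variable {V : Type u} {E : Type v} {G : Multigraph V E}

def copy {x y x' y' : V} (w : G.Walk x y) (hx : x = x') (hy : y = y') : G.Walk x' y' :=
  hx ▸ hy ▸ w

theorem copy_edgeList {x y x' y' : V} (w : G.Walk x y) (hx : x = x') (hy : y = y') :
    (w.copy hx hy).edgeList = w.edgeList := by
  subst hx; subst hy; rfl

theorem copy_vertList {x y x' y' : V} (w : G.Walk x y) (hx : x = x') (hy : y = y') :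
    (w.copy hx hy).vertList = w.vertList := by
  subst hx; subst hy; rfl

end Walk
end Multigraph
namespace Multigraph
namespace Walk

variable {V : Type u} {E : Type v} {G : Multigraph V E}

theorem auxReversePath {x y : V} (w : G.Walk x y) (hw : w.IsPath) : w.reverse.IsPath := by
  rw [IsPath, vertList_reverse, List.nodup_reverse]
  exact hw

theorem auxLift {G' : Multigraph V E} {u v : V}
    (f : V → V) (hfv : f v = u) (hfid : ∀ z, z ≠ v → f z = z)
    (hf : ∀ e, G'.inc e = Sym2.map f (G.inc e)) :
    ∀ {p q : V} (w : G'.Walk p q), q ≠ v → u ∉ w.vertList.tail.dropLast →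
    ∃ (a b : V) (w' : G.Walk a b), f a = p ∧ f b = q ∧
      w'.edgeList = w.edgeList ∧ w'.vertList.map f = w.vertList := by
  intro p q w
  induction w with
  | nil a =>
    intro hq _
    exact ⟨a, a, .nil a, hfid a hq, hfid a hq, rfl, by simp [vertList, hfid a hq]⟩
  | cons e he t ih =>
    rename_i x₀ y₀ z₀
    intro hq hu
    obtain ⟨a₀, b₀, h₀, hap, hby⟩ : ∃ a₀ b₀, G.inc e = s(a₀, b₀) ∧ f a₀ = x₀ ∧ f b₀ = y₀ := by
      obtain ⟨c, d, hcd⟩ := auxSym2Exists (G.inc e)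
      have hmap : s(f c, f d) = s(x₀, y₀) := by rw [← Sym2.map_pair_eq, ← hcd, ← hf e, he]
      rcases Sym2.eq_iff.1 hmap with ⟨h1, h2⟩ | ⟨h1, h2⟩
      · exact ⟨c, d, hcd, h1, h2⟩
      · exact ⟨d, c, hcd.trans Sym2.eq_swap, h2, h1⟩
    cases t with
    | nil =>
      exact ⟨a₀, b₀, .cons e h₀ (.nil b₀), hap, hby, rfl, by simp [vertList, hap, hby]⟩
    | cons e₂ he₂ t₂ =>
      rename_i y₁
      simp only [vertList, List.tail_cons,
        List.dropLast_cons_of_ne_nil t₂.auxVertNeNil, List.mem_cons, not_or] at hu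
      have hyu : y₀ ≠ u := fun h => hu.1 h.symm
      have ihcond : u ∉ (Walk.cons e₂ he₂ t₂).vertList.tail.dropLast := by
        simp only [vertList, List.tail_cons]
        exact hu.2
      obtain ⟨b', c', t', hb', hc', hE, hV⟩ := ih hq ihcond
      have hb'y : b' = y₀ := by
        by_cases hbv : b' = v
        · rw [hbv, hfv] at hb'
          exact absurd hb' hyu.symm
        · rw [hfid b' hbv] at hb'
          exact hb'
      have hb₀y : b₀ = y₀ := by
        by_cases hbv : b₀ = v
        · rw [hbv, hfv] at hby
          exact absurd hby hyu.symm
        · rw [hfid b₀ hbv] at hby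
          exact hby
      subst hb'y
      refine ⟨a₀, c', .cons e (hb₀y ▸ h₀) t', hap, hc', by simp [edgeList, hE], ?_⟩
      simp only [vertList, List.map_cons, hV, hap]

end Walk

theorem auxTwoPaths {V : Type u} {E : Type v} {G : Multigraph V E} {x y : V} (hxy : x ≠ y)
    {P Q : Set E} (hP : G.IsPathSet x y P) (hQ : G.IsPathSet x y Q) (hdisj : Disjoint P Q)
    (hV : G.VSet P ∩ G.VSet Q ⊆ {x, y}) : G.IsCycleSet (P ∪ Q) := by
  classical
  obtain ⟨wP, hwP, hPset⟩ := hP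
  obtain ⟨wQ, hwQ, hQset⟩ := hQ
  obtain ⟨mP, hmP⟩ := wP.auxDecomp hxy
  obtain ⟨mQ, hmQ⟩ := wQ.auxDecomp hxy
  have hPne : wP.edgeList ≠ [] := fun h => hxy (wP.auxEqOfEdgeNil h)
  have hQne : wQ.edgeList ≠ [] := fun h => hxy (wQ.auxEqOfEdgeNil h)
  have hPvert : ∀ z ∈ wP.vertList, z ∈ G.VSet P := by
    intro z hz
    obtain ⟨e, he, hze⟩ := wP.auxExistsEdge hPne hz
    exact ⟨e, by rw [← hPset]; exact he, hze⟩
  have hQvert : ∀ z ∈ wQ.vertList, z ∈ G.VSet Q := by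
    intro z hz
    obtain ⟨e, he, hze⟩ := wQ.auxExistsEdge hQne hz
    exact ⟨e, by rw [← hQset]; exact he, hze⟩
  have hPnd : (x :: (mP ++ [y])).Nodup := by
    have h := hwP
    rw [Walk.IsPath, hmP] at h
    exact h
  have hQnd : (x :: (mQ ++ [y])).Nodup := by
    have h := hwQ
    rw [Walk.IsPath, hmQ] at h
    exact h
  rw [List.nodup_cons] at hPnd hQnd
  have hxmP : x ∉ mP := fun h => hPnd.1 (List.mem_append_left _ h)
  have hxmQ : x ∉ mQ := fun h => hQnd.1 (List.mem_append_left _ h)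
  have hmPnd : mP.Nodup := hPnd.2.of_append_left
  have hmQnd : mQ.Nodup := hQnd.2.of_append_left
  have hymP : y ∉ mP := fun h => (List.disjoint_of_nodup_append hPnd.2) h (List.mem_singleton_self y)
  have hymQ : y ∉ mQ := fun h => (List.disjoint_of_nodup_append hQnd.2) h (List.mem_singleton_self y)
  have hmPQ : ∀ z ∈ mP, z ∉ mQ := by
    intro z hz1 hz2
    have h1 : z ∈ G.VSet P := hPvert z (by rw [hmP]; simp [hz1])
    have h2 : z ∈ G.VSet Q := hQvert z (by rw [hmQ]; simp [hz2])
    rcases hV ⟨h1, h2⟩ with h | h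
    · exact hxmP (h ▸ hz1)
    · exact hymP (h ▸ hz1)
  refine ⟨x, wP.append wQ.reverse, ⟨?_, ?_, ?_⟩, ?_⟩
  · rw [Walk.edgeList_append]
    simp [hPne]
  · rw [Walk.edgeList_append, Walk.edgeList_reverse]
    refine (wP.auxPathEdgeNodup hwP).append ((List.nodup_reverse).2 (wQ.auxPathEdgeNodup hwQ)) ?_
    intro e he1 he2
    rw [List.mem_reverse] at he2
    have h1 : e ∈ P := by rw [← hPset]; exact he1
    have h2 : e ∈ Q := by rw [← hQset]; exact he2
    exact Set.disjoint_left.1 hdisj h1 h2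
  · have hvl : (wP.append wQ.reverse).vertList = (x :: mP) ++ ((y :: mQ.reverse) ++ [x]) := by
      rw [Walk.vertList_append, Walk.vertList_reverse, hmP, hmQ,
        List.dropLast_concat]
      simp
    rw [hvl, List.dropLast_append_of_ne_nil (by simp), List.dropLast_concat]
    refine List.Nodup.append ?_ ?_ ?_
    · exact List.nodup_cons.2 ⟨hxmP, hmPnd⟩
    · exact List.nodup_cons.2 ⟨by simpa using hymQ, by simpa using hmQnd⟩
    · intro z hz1 hz2
      rw [List.mem_cons] at hz1 hz2
      rw [List.mem_reverse] at hz2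
      rcases hz1 with rfl | hz1
      · rcases hz2 with h | h
        · exact hxy h
        · exact hxmQ h
      · rcases hz2 with rfl | h
        · exact hymP hz1
        · exact hmPQ z hz1 h
  · ext e
    rw [← hPset, ← hQset]
    show e ∈ (wP.append wQ.reverse).edgeList ↔ _
    rw [Walk.edgeList_append, Walk.edgeList_reverse, List.mem_append, List.mem_reverse]
    rfl

end Multigraph
namespace Multigraph
namespace Walk

theorem auxDecompLen {V : Type u} {E : Type v} {G : Multigraph V E} {a b : V}
    (w : G.Walk a b) (hne : w.edgeList ≠ []) : ∃ m, w.vertList = a :: m ++ [b] := by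
  obtain ⟨l, hl⟩ := auxVertConcat w
  obtain ⟨l₂, hl₂⟩ := auxVertCons w
  have h2 : 2 ≤ w.vertList.length := by
    rw [auxLenVert w]
    have : 0 < w.edgeList.length := List.length_pos_iff.2 hne
    omega
  match l, hl with
  | [], hl => rw [hl] at h2; simp at h2
  | c :: l', hl =>
    have hca : a :: l₂ = c :: (l' ++ [b]) := by rw [← hl₂, hl]; simp
    have : a = c := (List.cons_eq_cons.1 hca).1
    subst this
    exact ⟨l', by rw [hl]⟩

end Walk

open Walk in
theorem auxUnbalLift {V : Type u} {E : Type v} {G G' : Multigraph V E} {u v : V} (huv : u ≠ v)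
    (f : V → V) (hfv : f v = u) (hfid : ∀ z, z ≠ v → f z = z) (hfnv : ∀ z, f z ≠ v)
    (hf : ∀ e, G'.inc e = Sym2.map f (G.inc e))
    {C : Set E} (hC : G'.IsCycleSet C)
    (htu : ∃ e ∈ C, u ∈ G.inc e) (htv : ∃ e ∈ C, v ∈ G.inc e) :
    ∃ (W : G.Walk u v) (J : List V),
      W.vertList = u :: J ++ [v] ∧ J.Nodup ∧ u ∉ J ∧ v ∉ J ∧
      W.edgeList.Nodup ∧ W.edgeSet = C ∧
      (∀ z ∈ J, ∃ e ∈ C, z ∈ G'.inc e) := by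
  classical
  obtain ⟨p, w0, hw0, hset⟩ := hC
  have hmem_iff : ∀ e, e ∈ w0.edgeList ↔ e ∈ C := fun e => by rw [← hset]; rfl
  obtain ⟨e₁, he₁C, he₁u⟩ := htu
  obtain ⟨e₂, he₂C, he₂v⟩ := htv
  have hfu : f u = u := hfid u huv
  have hu_inc₁ : u ∈ G'.inc e₁ := by
    rw [hf e₁, Sym2.mem_map]
    exact ⟨u, he₁u, hfu⟩
  have hu_inc₂ : u ∈ G'.inc e₂ := by
    rw [hf e₂, Sym2.mem_map]
    exact ⟨v, he₂v, hfv⟩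
  have hu_vl : u ∈ w0.vertList := auxMemVert w0 ((hmem_iff e₁).2 he₁C) hu_inc₁
  obtain ⟨c, hEperm, hVperm⟩ := auxRotate w0 hu_vl
  have hcne : c.edgeList ≠ [] := fun h => hw0.1 ((h ▸ hEperm).symm.eq_nil)
  have hcnd : c.edgeList.Nodup := hEperm.nodup_iff.2 hw0.2.1
  have hc : c.IsCycle := ⟨hcne, hcnd, hVperm.nodup_iff.2 hw0.2.2⟩
  have hmem_c : ∀ e, e ∈ c.edgeList ↔ e ∈ C := fun e => by rw [hEperm.mem_iff]; exact hmem_iff e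
  obtain ⟨int, hcvl, huint, hintnd⟩ := auxCycleStructure c hc
  have hint_sub : ∀ z ∈ int, z ∈ c.vertList := by
    intro z hz
    rw [hcvl]
    simp [hz]
  have hnov : ∀ z ∈ c.vertList, z ≠ v := by
    intro z hz
    obtain ⟨e, he, hze⟩ := auxExistsEdge c hcne hz
    rw [hf e, Sym2.mem_map] at hze
    obtain ⟨a, _, hfa⟩ := hze
    rw [← hfa]
    exact hfnv a
  have hvint : v ∉ int := fun h => hnov v (hint_sub v h) rfl
  have hcond : u ∉ c.vertList.tail.dropLast := by
    have : c.vertList.tail.dropLast = int := by rw [hcvl]; simp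
    rw [this]
    exact huint
  obtain ⟨a, b, W0, hfa, hfb, hE0, hV0⟩ := auxLift f hfv hfid hf c huv hcond
  have hmem_W0 : ∀ e, e ∈ W0.edgeList ↔ e ∈ C := fun e => by rw [hE0]; exact hmem_c e
  obtain ⟨M, hWvl⟩ := auxDecompLen W0 (by rw [hE0]; exact hcne)
  -- M = int
  have hMap : M.map f ++ [f b] = int ++ [u] := by
    have h := hV0
    rw [hWvl, hcvl] at h
    simp only [List.cons_append, List.map_cons, List.map_append, List.map_cons,
      List.map_nil] at h
    exact (List.cons_eq_cons.1 h).2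
  have hMf : M.map f = int := (List.append_inj' hMap (by simp)).1
  have hMint : M = int := by
    rw [← hMf]
    have : ∀ z ∈ M, f z = z := by
      intro z hz
      have hfz : f z ∈ int := hMf ▸ List.mem_map_of_mem (f := f) hz
      have hzu : f z ≠ u := fun h => huint (h ▸ hfz)
      have hzv : z ≠ v := fun h => hzu (by rw [h, hfv])
      rw [hfid z hzv]
    rw [List.map_congr_left this]
    simp
  rw [hMint] at hWvl
  -- membership of u and v
  have hu_W0 : u ∈ W0.vertList := auxMemVert W0 ((hmem_W0 e₁).2 he₁C) he₁u
  have hv_W0 : v ∈ W0.vertList := auxMemVert W0 ((hmem_W0 e₂).2 he₂C) he₂v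
  have hu_ab : u = a ∨ u = b := by
    rw [hWvl] at hu_W0
    rcases List.mem_append.1 hu_W0 with h | h
    · rcases List.mem_cons.1 h with h | h
      · exact Or.inl h
      · exact absurd h huint
    · exact Or.inr (List.mem_singleton.1 h)
  have hv_ab : v = a ∨ v = b := by
    rw [hWvl] at hv_W0
    rcases List.mem_append.1 hv_W0 with h | h
    · rcases List.mem_cons.1 h with h | h
      · exact Or.inl h
      · exact absurd h hvint
    · exact Or.inr (List.mem_singleton.1 h)
  have hJprops : ∀ z ∈ int, ∃ e ∈ C, z ∈ G'.inc e := by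
    intro z hz
    obtain ⟨e, he, hze⟩ := auxExistsEdge c hcne (hint_sub z hz)
    exact ⟨e, (hmem_c e).1 he, hze⟩
  have hcases : (a = u ∧ b = v) ∨ (a = v ∧ b = u) := by
    rcases hu_ab with h1 | h1 <;> rcases hv_ab with h2 | h2
    · exact absurd (h1.trans h2.symm) huv
    · exact Or.inl ⟨h1.symm, h2.symm⟩
    · exact Or.inr ⟨h2.symm, h1.symm⟩
    · exact absurd (h1.trans h2.symm) huv
  rcases hcases with ⟨rfl, rfl⟩ | ⟨rfl, rfl⟩
  · exact ⟨W0, int, hWvl, hintnd, huint, hvint,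
      by rw [hE0]; exact hcnd,
      by ext e; exact hmem_W0 e, hJprops⟩
  · refine ⟨W0.reverse, int.reverse, ?_, (List.nodup_reverse.2 hintnd), by simpa using huint,
      by simpa using hvint, ?_, ?_, ?_⟩
    · rw [vertList_reverse, hWvl]
      simp
    · rw [edgeList_reverse]
      exact List.nodup_reverse.2 (by rw [hE0]; exact hcnd)
    · ext e
      show e ∈ W0.reverse.edgeList ↔ _
      rw [edgeList_reverse, List.mem_reverse]
      exact hmem_W0 e
    · intro z hz
      exact hJprops z (List.mem_reverse.1 hz)

end Multigraph

/-- A biased graph: a multigraph together with a collection of balanced cycles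
satisfying the theta property. -/
structure BiasedGraph (V : Type u) (E : Type v) extends Multigraph V E where
  Balanced : Set E → Prop
  balanced_isCycle : ∀ C, Balanced C → toMultigraph.IsCycleSet C
  theta_property : ∀ x y P₁ P₂ P₃, toMultigraph.IsTheta x y P₁ P₂ P₃ →
    Balanced (P₁ ∪ P₂) → Balanced (P₂ ∪ P₃) → Balanced (P₁ ∪ P₃)

namespace BiasedGraph

variable {V : Type u} {E : Type v}

/-- A balancing vertex: every unbalanced cycle passes through it. -/
def BalancingVertex (Ω : BiasedGraph V E) (u : V) : Prop :=
  ∀ C, Ω.toMultigraph.IsCycleSet C → ¬ Ω.Balanced C → ∃ e ∈ C, u ∈ Ω.inc e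

/-- `C` is an unbalanced cycle of `Ω`. -/
def IsUnbalancedCycle (Ω : BiasedGraph V E) (C : Set E) : Prop :=
  Ω.toMultigraph.IsCycleSet C ∧ ¬ Ω.Balanced C

/-- Every cycle contained in `X` is balanced. -/
def BalancedSub (Ω : BiasedGraph V E) (X : Set E) : Prop :=
  ∀ C ⊆ X, Ω.toMultigraph.IsCycleSet C → Ω.Balanced C

/-- `e ~ f`: either `e = f` or some balanced cycle contains both. -/
def LinkRel (Ω : BiasedGraph V E) (e f : E) : Prop :=
  e = f ∨ ∃ C, Ω.toMultigraph.IsCycleSet C ∧ Ω.Balanced C ∧ e ∈ C ∧ f ∈ C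

/-- The same relation, with the balanced cycle restricted to lie inside `A`. -/
def LinkRelIn (Ω : BiasedGraph V E) (A : Set E) (e f : E) : Prop :=
  e = f ∨ ∃ C, C ⊆ A ∧ Ω.toMultigraph.IsCycleSet C ∧ Ω.Balanced C ∧ e ∈ C ∧ f ∈ C

/-- `S` is an unbalancing class of `delta u`: a (nonempty) equivalence class of `~`. -/
def IsUnbalancingClass (Ω : BiasedGraph V E) (u : V) (S : Set E) : Prop :=
  S.Nonempty ∧ S ⊆ Ω.toMultigraph.delta u ∧
    ∀ e ∈ S, ∀ f ∈ Ω.toMultigraph.delta u, (f ∈ S ↔ Ω.LinkRel e f)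

/-- `delta u` has exactly three unbalancing classes within the edge set `A`. -/
def HasThreeClassesIn (Ω : BiasedGraph V E) (u : V) (A : Set E) : Prop :=
  ∃ e₁ e₂ e₃, e₁ ∈ Ω.toMultigraph.delta u ∩ A ∧ e₂ ∈ Ω.toMultigraph.delta u ∩ A ∧
    e₃ ∈ Ω.toMultigraph.delta u ∩ A ∧
    ¬ Ω.LinkRelIn A e₁ e₂ ∧ ¬ Ω.LinkRelIn A e₁ e₃ ∧ ¬ Ω.LinkRelIn A e₂ e₃ ∧
    ∀ f ∈ Ω.toMultigraph.delta u ∩ A,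
      Ω.LinkRelIn A f e₁ ∨ Ω.LinkRelIn A f e₂ ∨ Ω.LinkRelIn A f e₃

/-- Tight handcuffs: two unbalanced cycles meeting in exactly one vertex. -/
def IsTightHandcuff (Ω : BiasedGraph V E) (X : Set E) : Prop :=
  ∃ C₁ C₂, Ω.IsUnbalancedCycle C₁ ∧ Ω.IsUnbalancedCycle C₂ ∧ Disjoint C₁ C₂ ∧
    (∃ x, Ω.toMultigraph.VSet C₁ ∩ Ω.toMultigraph.VSet C₂ = {x}) ∧ X = C₁ ∪ C₂

/-- Loose handcuffs: two vertex-disjoint unbalanced cycles joined by a path meeting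
each cycle only in an endpoint. -/
def IsLooseHandcuff (Ω : BiasedGraph V E) (X : Set E) : Prop :=
  ∃ C₁ C₂ P x y, Ω.IsUnbalancedCycle C₁ ∧ Ω.IsUnbalancedCycle C₂ ∧
    Disjoint (Ω.toMultigraph.VSet C₁) (Ω.toMultigraph.VSet C₂) ∧
    Ω.toMultigraph.IsPathSet x y P ∧ Disjoint P (C₁ ∪ C₂) ∧
    Ω.toMultigraph.VSet P ∩ Ω.toMultigraph.VSet C₁ = {x} ∧
    Ω.toMultigraph.VSet P ∩ Ω.toMultigraph.VSet C₂ = {y} ∧ X = C₁ ∪ C₂ ∪ P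

/-- A contrabalanced theta: a theta subgraph all three of whose cycles are unbalanced. -/
def IsContraTheta (Ω : BiasedGraph V E) (X : Set E) : Prop :=
  ∃ x y P₁ P₂ P₃, Ω.toMultigraph.IsTheta x y P₁ P₂ P₃ ∧
    ¬ Ω.Balanced (P₁ ∪ P₂) ∧ ¬ Ω.Balanced (P₂ ∪ P₃) ∧ ¬ Ω.Balanced (P₁ ∪ P₃) ∧
    X = P₁ ∪ P₂ ∪ P₃

/-- The circuits of the frame matroid of a biased graph. -/
def FrameCircuit (Ω : BiasedGraph V E) (X : Set E) : Prop :=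
  (Ω.toMultigraph.IsCycleSet X ∧ Ω.Balanced X) ∨ Ω.IsTightHandcuff X ∨
    Ω.IsLooseHandcuff X ∨ Ω.IsContraTheta X

/-- The number of balanced components of the subgraph induced by `X`. -/
noncomputable def numBalComponents (Ω : BiasedGraph V E) (X : Set E) : ℕ :=
  {D | D ∈ Ω.toMultigraph.components X ∧ Ω.BalancedSub D}.ncard

end BiasedGraph

section MatroidDefs

variable {α : Type*}

/-- A circuit of a matroid: a minimal dependent set. -/
def MCircuit (M : Matroid α) (C : Set α) : Prop :=
  C ⊆ M.E ∧ ¬ M.Indep C ∧ ∀ D ⊂ C, M.Indep D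

/-- A hyperplane: a maximal proper flat. -/
def MHyperplane (M : Matroid α) (H : Set α) : Prop :=
  M.IsFlat H ∧ H ≠ M.E ∧ ∀ F, M.IsFlat F → H ⊆ F → F = H ∨ F = M.E

/-- A cocircuit: a circuit of the dual matroid. -/
def MCocircuit (M : Matroid α) (K : Set α) : Prop := MCircuit (Matroid.dual M) K

open scoped Matroid in
/-- Deletion of a set of elements. -/
def MDelete (M : Matroid α) (D : Set α) : Matroid α := M ↾ (M.E \ D)

/-- Contraction of a set of elements. -/
def MContract (M : Matroid α) (C : Set α) : Matroid α :=
  Matroid.dual (MDelete (Matroid.dual M) C)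

/-- `N` is a minor of `M`. -/
def IsMinorOf (N M : Matroid α) : Prop := ∃ C D, N = MDelete (MContract M C) D

/-- The rank of a set in a matroid (junk value if unbounded). -/
noncomputable def mRank (M : Matroid α) (X : Set α) : ℕ :=
  sSup {n : ℕ | ∃ I, M.Indep I ∧ I ⊆ X ∧ I.ncard = n}

/-- A matroid is connected if any two elements lie on a common circuit. -/
def MatroidConnected (M : Matroid α) : Prop :=
  M.E.Nonempty ∧ ∀ e ∈ M.E, ∀ f ∈ M.E, e = f ∨ ∃ C, MCircuit M C ∧ e ∈ C ∧ f ∈ C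

/-- A `k`-separation of a matroid. -/
def MatroidKSeparation (M : Matroid α) (X Y : Set α) (k : ℕ) : Prop :=
  X ∪ Y = M.E ∧ Disjoint X Y ∧ k ≤ X.ncard ∧ k ≤ Y.ncard ∧
    mRank M X + mRank M Y + 1 = mRank M M.E + k

/-- A matroid is 3-connected if it has no `k`-separation for `k < 3`. -/
def Matroid3Connected (M : Matroid α) : Prop :=
  ∀ X Y (k : ℕ), k ≤ 2 → ¬ MatroidKSeparation M X Y k

/-- A matroid is graphic if its circuits are exactly the cycles of some multigraph. -/
def IsGraphic (M : Matroid α) : Prop :=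
  ∃ (W : Type) (G : Multigraph W α), ∀ C, MCircuit M C ↔ G.IsCycleSet C

/-- A matroid has a `U_{2,4}` minor. -/
def HasU24Minor (M : Matroid α) : Prop :=
  ∃ N : Matroid α, IsMinorOf N M ∧ N.E.ncard = 4 ∧
    ∀ C, MCircuit N C ↔ C ⊆ N.E ∧ C.ncard = 3

end MatroidDefs

/-- `M` is the frame matroid of the biased graph `Ω` (on ground set all of `E`). -/
def IsFrameMatroidOf {V E : Type*} (M : Matroid E) (Ω : BiasedGraph V E) : Prop :=
  M.E = Set.univ ∧ ∀ C, MCircuit M C ↔ Ω.FrameCircuit C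

open scoped Matroid in
/-- A vertex is committed: the complement of its edge star is a connected
nongraphic hyperplane of the frame matroid. -/
def BiasedGraph.IsCommitted {V E : Type*} (Ω : BiasedGraph V E) (M : Matroid E) (x : V) : Prop :=
  MHyperplane M (Ω.toMultigraph.deltaPlus x)ᶜ ∧
    MatroidConnected (M ↾ (Ω.toMultigraph.deltaPlus x)ᶜ) ∧
    ¬ IsGraphic (M ↾ (Ω.toMultigraph.deltaPlus x)ᶜ)

/-- `Ω'` is a roll-up of `Ω` at the balancing vertex `u`: some (possibly empty)
unbalancing class of links at `u` is replaced by unbalanced loops at their other endpoints. -/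
def BiasedGraph.IsRollUpOf {V E : Type*} (Ω' Ω : BiasedGraph V E) (u : V) : Prop :=
  ∃ S : Set E, (S = ∅ ∨ Ω.IsUnbalancingClass u S) ∧
    (∀ e ∉ S, Ω'.inc e = Ω.inc e) ∧
    (∀ e ∈ S, ∃ w, w ≠ u ∧ Ω.inc e = s(u, w) ∧ Ω'.inc e = s(w, w)) ∧
    (∀ C, Ω'.Balanced C ↔ (Ω.Balanced C ∧ C ∩ S = ∅))



open Multigraph Multigraph.Walk

/-- Pinching two vertices of a graph yields a biased graph whose frame
matroid is the cycle matroid of the original graph. -/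
theorem stmt7 {V E : Type*} [DecidableEq V] (G : Multigraph V E) (u v : V) (huv : u ≠ v)
    (Ω' : BiasedGraph V E)
    (hinc : ∀ e, Ω'.inc e = Sym2.map (fun x => if x = v then u else x) (G.inc e))
    (hbal : ∀ C, Ω'.Balanced C ↔ (Ω'.toMultigraph.IsCycleSet C ∧
      ¬ ((∃ e ∈ C, u ∈ G.inc e) ∧ (∃ e ∈ C, v ∈ G.inc e)))) :
    ∀ C, Ω'.FrameCircuit C ↔ G.IsCycleSet C := by
  classical
  obtain ⟨f, hf_def⟩ : ∃ f : V → V, f = fun x => if x = v then u else x := ⟨_, rfl⟩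
  rw [← hf_def] at hinc
  have hfv : f v = u := by rw [hf_def]; simp
  have hfid : ∀ z, z ≠ v → f z = z := by
    intro z hz
    rw [hf_def]
    simp [hz]
  have hfu : f u = u := hfid u huv
  have hfnv : ∀ z, f z ≠ v := by
    intro z
    rw [hf_def]
    by_cases hz : z = v
    · simpa [hz] using huv
    · simpa [hz] using hz
  have hGtoU : ∀ {e}, u ∈ G.inc e → u ∈ Ω'.toMultigraph.inc e := by
    intro e h
    rw [hinc e, Sym2.mem_map]
    exact ⟨u, h, hfu⟩
  have hGtoV : ∀ {e}, v ∈ G.inc e → u ∈ Ω'.toMultigraph.inc e := by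
    intro e h
    rw [hinc e, Sym2.mem_map]
    exact ⟨v, h, hfv⟩
  have hnoV : ∀ {e z}, z ∈ Ω'.toMultigraph.inc e → z ≠ v := by
    intro e z hz
    rw [hinc e, Sym2.mem_map] at hz
    obtain ⟨a, _, ha⟩ := hz
    rw [← ha]
    exact hfnv a
  have hfix : ∀ {e}, v ∉ G.inc e → Ω'.toMultigraph.inc e = G.inc e := by
    intro e hv
    rw [hinc e]
    obtain ⟨a, b, hab⟩ := auxSym2Exists (G.inc e)
    have hav : a ≠ v := fun h => hv (by rw [hab, h]; exact Sym2.mem_mk_left ..)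
    have hbv : b ≠ v := fun h => hv (by rw [hab, h]; exact Sym2.mem_mk_right ..)
    rw [hab, Sym2.map_pair_eq, hfid a hav, hfid b hbv]
  -- unbalanced cycles touch both u and v
  have htouch : ∀ {D}, Ω'.toMultigraph.IsCycleSet D → ¬ Ω'.Balanced D →
      (∃ e ∈ D, u ∈ G.inc e) ∧ (∃ e ∈ D, v ∈ G.inc e) := by
    intro D hD hnB
    by_contra h
    exact hnB ((hbal D).2 ⟨hD, h⟩)
  have huVSet : ∀ {D : Set E}, (∃ e ∈ D, u ∈ G.inc e) ∨ (∃ e ∈ D, v ∈ G.inc e) →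
      u ∈ Ω'.toMultigraph.VSet D := by
    rintro D (⟨e, heD, he⟩ | ⟨e, heD, he⟩)
    · exact ⟨e, heD, hGtoU he⟩
    · exact ⟨e, heD, hGtoV he⟩
  intro C
  constructor
  · -- frame circuit → cycle of G
    intro hFC
    rcases hFC with ⟨hcyc, hbalC⟩ | hth | hlh | hct
    · -- balanced cycle
      have hnb : ¬ ((∃ e ∈ C, u ∈ G.inc e) ∧ (∃ e ∈ C, v ∈ G.inc e)) := ((hbal C).1 hbalC).2
      obtain ⟨p, w, hw, hset⟩ := hcyc
      have hmem : ∀ e, e ∈ w.edgeList ↔ e ∈ C := fun e => by rw [← hset]; rfl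
      by_cases hV : ∃ e ∈ C, v ∈ G.inc e
      · -- no edge at u; map back via g
        have hU : ¬ ∃ e ∈ C, u ∈ G.inc e := fun h => hnb ⟨h, hV⟩
        obtain ⟨g, hg_def⟩ : ∃ g : V → V, g = fun z => if z = u then v else z := ⟨_, rfl⟩
        have hgfix : ∀ {e}, e ∈ C → ∀ z ∈ G.inc e, g (f z) = z := by
          intro e heC z hz
          have hzu : z ≠ u := fun h => hU ⟨e, heC, h ▸ hz⟩
          by_cases hzv : z = v
          · rw [hzv, hfv, hg_def]
            simp
          · rw [hfid z hzv, hg_def]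
            simp [hzu]
        have hg : ∀ e ∈ w.edgeList, G.inc e = Sym2.map g (Ω'.toMultigraph.inc e) := by
          intro e he
          have heC : e ∈ C := (hmem e).1 he
          rw [hinc e]
          obtain ⟨a, b, hab⟩ := auxSym2Exists (G.inc e)
          have hga : g (f a) = a := hgfix heC a (by rw [hab]; exact Sym2.mem_mk_left ..)
          have hgb : g (f b) = b := hgfix heC b (by rw [hab]; exact Sym2.mem_mk_right ..)
          rw [hab, Sym2.map_pair_eq, Sym2.map_pair_eq, hga, hgb]
        obtain ⟨w', hE', hV'⟩ := auxMap g w hg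
        refine ⟨g p, w', ⟨?_, ?_, ?_⟩, ?_⟩
        · rw [hE']; exact hw.1
        · rw [hE']; exact hw.2.1
        · rw [hV', ← List.map_dropLast]
          refine hw.2.2.map_on ?_
          intro z hz z' hz' hgz
          obtain ⟨e, -, hze⟩ := auxExistsEdge w hw.1 (List.mem_of_mem_dropLast hz)
          obtain ⟨e', -, hze'⟩ := auxExistsEdge w hw.1 (List.mem_of_mem_dropLast hz')
          have hzv : z ≠ v := hnoV hze
          have hzv' : z' ≠ v := hnoV hze'
          rw [hg_def] at hgz
          by_cases h1 : z = u <;> by_cases h2 : z' = u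
          · rw [h1, h2]
          · simp [h1, h2] at hgz
            exact absurd hgz.symm hzv'
          · simp [h1, h2] at hgz
            exact absurd hgz hzv
          · simpa [h1, h2] using hgz
        · ext e
          show e ∈ w'.edgeList ↔ e ∈ C
          rw [hE']
          exact hmem e
      · -- no edge at v: identity transfer
        have hg : ∀ e ∈ w.edgeList, G.inc e = Sym2.map (fun z => z) (Ω'.toMultigraph.inc e) := by
          intro e he
          rw [Sym2.map_id', id_eq]
          exact (hfix (fun h => hV ⟨e, (hmem e).1 he, h⟩)).symm
        obtain ⟨w', hE', hV'⟩ := auxMap (fun z => z) w hg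
        refine ⟨p, w', ⟨?_, ?_, ?_⟩, ?_⟩
        · rw [hE']; exact hw.1
        · rw [hE']; exact hw.2.1
        · rw [hV', List.map_id' w.vertList]; exact hw.2.2
        · ext e
          show e ∈ w'.edgeList ↔ e ∈ C
          rw [hE']
          exact hmem e
    · -- tight handcuff
      obtain ⟨C₁, C₂, hC₁, hC₂, hdisj, ⟨x, hVx⟩, hX⟩ := hth
      obtain ⟨ht1u, ht1v⟩ := htouch hC₁.1 hC₁.2
      obtain ⟨ht2u, ht2v⟩ := htouch hC₂.1 hC₂.2
      obtain ⟨W₁, J₁, hvl₁, hnd₁, hu₁, hv₁, hEnd₁, hES₁, hJ₁⟩ :=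
        auxUnbalLift huv f hfv hfid hfnv hinc hC₁.1 ht1u ht1v
      obtain ⟨W₂, J₂, hvl₂, hnd₂, hu₂, hv₂, hEnd₂, hES₂, hJ₂⟩ :=
        auxUnbalLift huv f hfv hfid hfnv hinc hC₂.1 ht2u ht2v
      have hxu : x = u := by
        have : u ∈ ({x} : Set V) := hVx ▸ ⟨huVSet (Or.inl ht1u), huVSet (Or.inl ht2u)⟩
        exact (Set.mem_singleton_iff.1 this).symm
      rw [hxu] at hVx
      have hJdisj : ∀ z ∈ J₁, z ∉ J₂ := by
        intro z hz1 hz2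
        obtain ⟨e, heC, hze⟩ := hJ₁ z hz1
        obtain ⟨e', heC', hze'⟩ := hJ₂ z hz2
        have : z ∈ Ω'.toMultigraph.VSet C₁ ∩ Ω'.toMultigraph.VSet C₂ := ⟨⟨e, heC, hze⟩, ⟨e', heC', hze'⟩⟩
        rw [hVx] at this
        exact hu₁ (Set.mem_singleton_iff.1 this ▸ hz1)
      have hE1ne : W₁.edgeList ≠ [] := fun h => huv (auxEqOfEdgeNil W₁ h)
      have hE1mem : ∀ e, e ∈ W₁.edgeList ↔ e ∈ C₁ := fun e => by rw [← hES₁]; rfl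
      have hE2mem : ∀ e, e ∈ W₂.edgeList ↔ e ∈ C₂ := fun e => by rw [← hES₂]; rfl
      refine ⟨u, W₁.append W₂.reverse, ⟨?_, ?_, ?_⟩, ?_⟩
      · rw [edgeList_append]
        simp [hE1ne]
      · rw [edgeList_append, edgeList_reverse]
        refine hEnd₁.append (List.nodup_reverse.2 hEnd₂) ?_
        intro e he1 he2
        rw [List.mem_reverse] at he2
        exact Set.disjoint_left.1 hdisj ((hE1mem e).1 he1) ((hE2mem e).1 he2)
      · have hvl : (W₁.append W₂.reverse).vertList = (u :: J₁) ++ ((v :: J₂.reverse) ++ [u]) := by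
          rw [vertList_append, vertList_reverse, hvl₁, hvl₂, List.dropLast_concat]
          simp
        rw [hvl, List.dropLast_append_of_ne_nil (by simp), List.dropLast_concat]
        refine List.Nodup.append (List.nodup_cons.2 ⟨hu₁, hnd₁⟩)
          (List.nodup_cons.2 ⟨by simpa using hv₂, List.nodup_reverse.2 hnd₂⟩) ?_
        intro z hz1 hz2
        rw [List.mem_cons] at hz1 hz2
        rw [List.mem_reverse] at hz2
        rcases hz1 with rfl | hz1
        · rcases hz2 with h | h
          · exact huv h
          · exact hu₂ h
        · rcases hz2 with rfl | h
          · exact hv₁ hz1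
          · exact hJdisj z hz1 h
      · ext e
        show e ∈ (W₁.append W₂.reverse).edgeList ↔ e ∈ C
        rw [edgeList_append, edgeList_reverse, List.mem_append, List.mem_reverse, hX]
        rw [hE1mem e, hE2mem e]
        rfl
    · -- loose handcuff: impossible
      exfalso
      obtain ⟨C₁, C₂, P, x, y, hC₁, hC₂, hVdisj, -, -, -, -, -⟩ := hlh
      obtain ⟨ht1u, -⟩ := htouch hC₁.1 hC₁.2
      obtain ⟨ht2u, -⟩ := htouch hC₂.1 hC₂.2
      exact Set.disjoint_left.1 hVdisj (huVSet (Or.inl ht1u)) (huVSet (Or.inl ht2u))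
    · -- contrabalanced theta: impossible
      exfalso
      obtain ⟨x, y, P₁, P₂, P₃, ⟨hxy, hp1, hp2, hp3, d12, d23, d13, v12, v23, v13⟩,
        h12, h23, h13, -⟩ := hct
      have cyc12 := auxTwoPaths hxy hp1 hp2 d12 v12
      have cyc23 := auxTwoPaths hxy hp2 hp3 d23 v23
      have cyc13 := auxTwoPaths hxy hp1 hp3 d13 v13
      obtain ⟨t12u, t12v⟩ := htouch cyc12 h12
      obtain ⟨t23u, t23v⟩ := htouch cyc23 h23
      obtain ⟨t13u, t13v⟩ := htouch cyc13 h13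
      -- u is x or y
      have hsplit : ∀ {A B : Set E}, (∃ e ∈ A ∪ B, u ∈ G.inc e) →
          (∃ e ∈ A, u ∈ G.inc e) ∨ (∃ e ∈ B, u ∈ G.inc e) := by
        rintro A B ⟨e, he, heu⟩
        rcases he with he | he
        · exact Or.inl ⟨e, he, heu⟩
        · exact Or.inr ⟨e, he, heu⟩
      have hsplitv : ∀ {A B : Set E}, (∃ e ∈ A ∪ B, v ∈ G.inc e) →
          (∃ e ∈ A, v ∈ G.inc e) ∨ (∃ e ∈ B, v ∈ G.inc e) := by
        rintro A B ⟨e, he, heu⟩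
        rcases he with he | he
        · exact Or.inl ⟨e, he, heu⟩
        · exact Or.inr ⟨e, he, heu⟩
      have huv12 := hsplit t12u
      have huv23 := hsplit t23u
      have huv13 := hsplit t13u
      have hu_in : ∀ {A : Set E}, (∃ e ∈ A, u ∈ G.inc e) → u ∈ Ω'.toMultigraph.VSet A :=
        fun h => huVSet (Or.inl h)
      have hmem_xy : ∀ {z : V}, z ∈ ({x, y} : Set V) → z = x ∨ z = y := by
        intro z hz
        simpa using hz
      have hu_xy : u = x ∨ u = y := by
        have m12 := huv12.imp hu_in hu_in
        have m23 := huv23.imp hu_in hu_in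
        have m13 := huv13.imp hu_in hu_in
        have key : (u ∈ Ω'.toMultigraph.VSet P₁ ∧ u ∈ Ω'.toMultigraph.VSet P₂) ∨
            (u ∈ Ω'.toMultigraph.VSet P₂ ∧ u ∈ Ω'.toMultigraph.VSet P₃) ∨
            (u ∈ Ω'.toMultigraph.VSet P₁ ∧ u ∈ Ω'.toMultigraph.VSet P₃) := by
          rcases m12 with h1 | h2
          · rcases m23 with h2' | h3
            · exact Or.inl ⟨h1, h2'⟩
            · exact Or.inr (Or.inr ⟨h1, h3⟩)
          · rcases m13 with h1' | h3
            · exact Or.inl ⟨h1', h2⟩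
            · exact Or.inr (Or.inl ⟨h2, h3⟩)
        rcases key with h | h | h
        · exact hmem_xy (v12 ⟨h.1, h.2⟩)
        · exact hmem_xy (v23 ⟨h.1, h.2⟩)
        · exact hmem_xy (v13 ⟨h.1, h.2⟩)
      -- no path touches both u and v
      have noboth : ∀ {P : Set E}, Ω'.toMultigraph.IsPathSet x y P →
          (∃ e ∈ P, u ∈ G.inc e) → (∃ e ∈ P, v ∈ G.inc e) → False := by
        rintro P ⟨w, hw, hset⟩ ⟨e, heP, heu⟩ ⟨e', heP', hev⟩
        have hmem : ∀ g, g ∈ w.edgeList ↔ g ∈ P := fun g => by rw [← hset]; rfl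
        have hue : u ∈ Ω'.toMultigraph.inc e := hGtoU heu
        have hue' : u ∈ Ω'.toMultigraph.inc e' := hGtoV hev
        have hee' : e = e' := by
          rcases hu_xy with rfl | rfl
          · exact auxEdgeAtStart w hw ((hmem e).2 heP) ((hmem e').2 heP') hue hue'
          · refine auxEdgeAtStart w.reverse (auxReversePath w hw) ?_ ?_ hue hue' <;>
              rw [edgeList_reverse, List.mem_reverse]
            · exact (hmem e).2 heP
            · exact (hmem e').2 heP'
        subst hee'
        -- e has both endpoints u, v in G, so it is a loop in Ω'
        have hdiag : (Ω'.toMultigraph.inc e).IsDiag := by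
          obtain ⟨a, b, hab⟩ := auxSym2Exists (G.inc e)
          rw [hinc e, hab, Sym2.map_pair_eq, Sym2.mk_isDiag_iff]
          rw [hab, Sym2.mem_iff] at heu hev
          rcases heu with h1 | h1 <;> rcases hev with h2 | h2
          · exact absurd (h1.trans h2.symm) huv
          · rw [← h1, ← h2, hfu, hfv]
          · rw [← h2, ← h1, hfv, hfu]
          · exact absurd (h1.trans h2.symm) huv
        exact auxPathNotDiag w hw ((hmem e).2 heP) hdiag
      have n1 : ¬ ((∃ e ∈ P₁, u ∈ G.inc e) ∧ (∃ e ∈ P₁, v ∈ G.inc e)) :=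
        fun h => noboth hp1 h.1 h.2
      have n2 : ¬ ((∃ e ∈ P₂, u ∈ G.inc e) ∧ (∃ e ∈ P₂, v ∈ G.inc e)) :=
        fun h => noboth hp2 h.1 h.2
      have n3 : ¬ ((∃ e ∈ P₃, u ∈ G.inc e) ∧ (∃ e ∈ P₃, v ∈ G.inc e)) :=
        fun h => noboth hp3 h.1 h.2
      have hvv12 := hsplitv t12v
      have hvv23 := hsplitv t23v
      have hvv13 := hsplitv t13v
      by_cases hA1 : ∃ e ∈ P₁, u ∈ G.inc e
      · have hB1 : ¬ ∃ e ∈ P₁, v ∈ G.inc e := fun b => n1 ⟨hA1, b⟩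
        have hB2 := hvv12.resolve_left hB1
        have hB3 := hvv13.resolve_left hB1
        have hA2 : ¬ ∃ e ∈ P₂, u ∈ G.inc e := fun a => n2 ⟨a, hB2⟩
        have hA3 : ¬ ∃ e ∈ P₃, u ∈ G.inc e := fun a => n3 ⟨a, hB3⟩
        exact hA3 (huv23.resolve_left hA2)
      · have hA2 := huv12.resolve_left hA1
        have hA3 := huv13.resolve_left hA1
        have hB2 : ¬ ∃ e ∈ P₂, v ∈ G.inc e := fun b => n2 ⟨hA2, b⟩
        have hB3 : ¬ ∃ e ∈ P₃, v ∈ G.inc e := fun b => n3 ⟨hA3, b⟩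
        exact hB3 (hvv23.resolve_left hB2)
  · -- cycle of G → frame circuit
    intro hGC
    obtain ⟨p, w, hw, hset⟩ := hGC
    have hmem : ∀ e, e ∈ w.edgeList ↔ e ∈ C := fun e => by rw [← hset]; rfl
    by_cases hV : ∃ e ∈ C, v ∈ G.inc e
    · by_cases hU : ∃ e ∈ C, u ∈ G.inc e
      · -- both: tight handcuffs
        obtain ⟨e₁, he₁C, he₁u⟩ := hU
        obtain ⟨e₂, he₂C, he₂v⟩ := hV
        have hu_vl : u ∈ w.vertList := auxMemVert w ((hmem e₁).2 he₁C) he₁u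
        obtain ⟨c, hEperm, hVperm⟩ := auxRotate w hu_vl
        have hcne : c.edgeList ≠ [] := fun h => hw.1 ((h ▸ hEperm).symm.eq_nil)
        have hcnd : c.edgeList.Nodup := hEperm.nodup_iff.2 hw.2.1
        have hmem_c : ∀ e, e ∈ c.edgeList ↔ e ∈ C := fun e => by
          rw [hEperm.mem_iff]; exact hmem e
        have hv_c : v ∈ c.vertList := auxMemVert c ((hmem_c e₂).2 he₂C) he₂v
        obtain ⟨W₁, W₂, hE, hVl⟩ := auxSplit c hv_c
        obtain ⟨K₁, hK₁⟩ := auxDecomp W₁ huv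
        obtain ⟨K₂, hK₂⟩ := auxDecomp W₂ huv.symm
        have hW₁dl : W₁.vertList.dropLast = u :: K₁ := by rw [hK₁]; exact List.dropLast_concat ..
        have hcvl : c.vertList = (u :: K₁) ++ ((v :: K₂) ++ [u]) := by
          rw [← hVl, hW₁dl, hK₂]
        have hcdl : c.vertList.dropLast = (u :: K₁) ++ (v :: K₂) := by
          rw [hcvl, List.dropLast_append_of_ne_nil (by simp), List.dropLast_concat]
        have hnd : ((u :: K₁) ++ (v :: K₂)).Nodup := by
          rw [← hcdl]
          exact hVperm.nodup_iff.2 hw.2.2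
        have hnd1 : (u :: K₁).Nodup := hnd.of_append_left
        have hnd2 : (v :: K₂).Nodup := hnd.of_append_right
        have hdisjL : List.Disjoint (u :: K₁) (v :: K₂) := List.disjoint_of_nodup_append hnd
        have huK₁ : u ∉ K₁ := (List.nodup_cons.1 hnd1).1
        have hvK₂ : v ∉ K₂ := (List.nodup_cons.1 hnd2).1
        have hK₁nd : K₁.Nodup := (List.nodup_cons.1 hnd1).2
        have hK₂nd : K₂.Nodup := (List.nodup_cons.1 hnd2).2
        have huK₂ : u ∉ K₂ := fun h => (hdisjL (List.mem_cons_self ..) (List.mem_cons_of_mem _ h))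
        have hvK₁ : v ∉ K₁ := fun h => (hdisjL (List.mem_cons_of_mem _ h) (List.mem_cons_self ..))
        have hKdisj : ∀ z ∈ K₁, z ∉ K₂ := fun z h1 h2 =>
          hdisjL (List.mem_cons_of_mem _ h1) (List.mem_cons_of_mem _ h2)
        have hEnd : (W₁.edgeList ++ W₂.edgeList).Nodup := by rw [hE]; exact hcnd
        have hE1nd : W₁.edgeList.Nodup := hEnd.of_append_left
        have hE2nd : W₂.edgeList.Nodup := hEnd.of_append_right
        have hEdisj : List.Disjoint W₁.edgeList W₂.edgeList := List.disjoint_of_nodup_append hEnd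
        have hE1ne : W₁.edgeList ≠ [] := fun h => huv (auxEqOfEdgeNil W₁ h)
        have hE2ne : W₂.edgeList ≠ [] := fun h => huv (auxEqOfEdgeNil W₂ h).symm
        -- map both pieces to Ω'
        obtain ⟨Z₁', hZE₁', hZV₁''⟩ := auxMap (G' := Ω'.toMultigraph) f W₁ (fun e _ => hinc e)
        obtain ⟨Z₂', hZE₂', hZV₂''⟩ := auxMap (G' := Ω'.toMultigraph) f W₂ (fun e _ => hinc e)
        set Z₁ : Ω'.toMultigraph.Walk u u := Z₁'.copy hfu hfv with hZ₁def
        set Z₂ : Ω'.toMultigraph.Walk u u := Z₂'.copy hfv hfu with hZ₂def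
        have hZE₁ : Z₁.edgeList = W₁.edgeList := by rw [hZ₁def, copy_edgeList, hZE₁']
        have hZE₂ : Z₂.edgeList = W₂.edgeList := by rw [hZ₂def, copy_edgeList, hZE₂']
        have hZV₁ : Z₁.vertList = W₁.vertList.map f := by rw [hZ₁def, copy_vertList, hZV₁'']
        have hZV₂ : Z₂.vertList = W₂.vertList.map f := by rw [hZ₂def, copy_vertList, hZV₂'']
        have hK₁fix : K₁.map f = K₁ := by
          rw [List.map_congr_left (fun z hz => hfid z (fun h => hvK₁ (h ▸ hz)))]
          simp
        have hK₂fix : K₂.map f = K₂ := by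
          rw [List.map_congr_left (fun z hz => hfid z (fun h => hvK₂ (h ▸ hz)))]
          simp
        have hZV₁' : Z₁.vertList = (u :: K₁) ++ [u] := by
          rw [hZV₁, hK₁]
          simp [hfu, hfv, hK₁fix]
        have hZV₂' : Z₂.vertList = (u :: K₂) ++ [u] := by
          rw [hZV₂, hK₂]
          simp [hfu, hfv, hK₂fix]
        have hcyc₁ : Ω'.toMultigraph.IsCycleSet W₁.edgeSet := by
          refine ⟨u, Z₁, ⟨?_, ?_, ?_⟩, ?_⟩
          · rw [hZE₁]; exact hE1ne
          · rw [hZE₁]; exact hE1nd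
          · rw [hZV₁', List.dropLast_concat]
            exact hnd1
          · ext e
            show e ∈ Z₁.edgeList ↔ e ∈ W₁.edgeSet
            rw [hZE₁]
            rfl
        have hcyc₂ : Ω'.toMultigraph.IsCycleSet W₂.edgeSet := by
          refine ⟨u, Z₂, ⟨?_, ?_, ?_⟩, ?_⟩
          · rw [hZE₂]; exact hE2ne
          · rw [hZE₂]; exact hE2nd
          · rw [hZV₂', List.dropLast_concat]
            exact List.nodup_cons.2 ⟨huK₂, hK₂nd⟩
          · ext e
            show e ∈ Z₂.edgeList ↔ e ∈ W₂.edgeSet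
            rw [hZE₂]
            rfl
        -- both pieces touch u and v in G
        have htouch₁ : (∃ e ∈ W₁.edgeSet, u ∈ G.inc e) ∧ (∃ e ∈ W₁.edgeSet, v ∈ G.inc e) := by
          constructor
          · obtain ⟨e, he, hze⟩ := auxExistsEdge W₁ hE1ne (by rw [hK₁]; exact List.mem_cons_self ..)
            exact ⟨e, he, hze⟩
          · obtain ⟨e, he, hze⟩ := auxExistsEdge W₁ hE1ne
              (by rw [hK₁]; exact List.mem_append_right _ (List.mem_singleton_self v))
            exact ⟨e, he, hze⟩
        have htouch₂ : (∃ e ∈ W₂.edgeSet, u ∈ G.inc e) ∧ (∃ e ∈ W₂.edgeSet, v ∈ G.inc e) := by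
          constructor
          · obtain ⟨e, he, hze⟩ := auxExistsEdge W₂ hE2ne
              (by rw [hK₂]; exact List.mem_append_right _ (List.mem_singleton_self u))
            exact ⟨e, he, hze⟩
          · obtain ⟨e, he, hze⟩ := auxExistsEdge W₂ hE2ne (by rw [hK₂]; exact List.mem_cons_self ..)
            exact ⟨e, he, hze⟩
        have hunbal₁ : ¬ Ω'.Balanced W₁.edgeSet := by
          intro hB
          exact ((hbal _).1 hB).2 htouch₁
        have hunbal₂ : ¬ Ω'.Balanced W₂.edgeSet := by
          intro hB
          exact ((hbal _).1 hB).2 htouch₂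
        have hvert₁ : ∀ z, z ∈ Ω'.toMultigraph.VSet W₁.edgeSet → z = u ∨ z ∈ K₁ := by
          rintro z ⟨e, he, hze⟩
          have : z ∈ Z₁.vertList := auxMemVert Z₁ (by rw [hZE₁]; exact he) hze
          rw [hZV₁'] at this
          rcases List.mem_append.1 this with h | h
          · rcases List.mem_cons.1 h with h | h
            · exact Or.inl h
            · exact Or.inr h
          · exact Or.inl (List.mem_singleton.1 h)
        have hvert₂ : ∀ z, z ∈ Ω'.toMultigraph.VSet W₂.edgeSet → z = u ∨ z ∈ K₂ := by
          rintro z ⟨e, he, hze⟩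
          have : z ∈ Z₂.vertList := auxMemVert Z₂ (by rw [hZE₂]; exact he) hze
          rw [hZV₂'] at this
          rcases List.mem_append.1 this with h | h
          · rcases List.mem_cons.1 h with h | h
            · exact Or.inl h
            · exact Or.inr h
          · exact Or.inl (List.mem_singleton.1 h)
        refine Or.inr (Or.inl ⟨W₁.edgeSet, W₂.edgeSet, ⟨hcyc₁, hunbal₁⟩, ⟨hcyc₂, hunbal₂⟩,
          ?_, ⟨u, ?_⟩, ?_⟩)
        · rw [Set.disjoint_left]
          intro e he₁ he₂
          exact hEdisj he₁ he₂
        · ext z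
          simp only [Set.mem_inter_iff, Set.mem_singleton_iff]
          constructor
          · rintro ⟨h1, h2⟩
            rcases hvert₁ z h1 with rfl | h1' 
            · rfl
            rcases hvert₂ z h2 with rfl | h2'
            · rfl
            exact absurd h2' (hKdisj z h1')
          · rintro rfl
            exact ⟨huVSet (Or.inl htouch₁.1), huVSet (Or.inl htouch₂.1)⟩
        · ext e
          rw [← hset]
          show e ∈ w.edgeList ↔ _
          rw [← hEperm.mem_iff, ← hE]
          show _ ↔ e ∈ W₁.edgeList ∨ e ∈ W₂.edgeList
          exact List.mem_append
      · -- v-edge but no u-edge: map via f, balanced cycle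
        obtain ⟨w', hE', hV'⟩ := auxMap (G' := Ω'.toMultigraph) f w (fun e _ => hinc e)
        have hcyc : Ω'.toMultigraph.IsCycleSet C := by
          refine ⟨f p, w', ⟨?_, ?_, ?_⟩, ?_⟩
          · rw [hE']; exact hw.1
          · rw [hE']; exact hw.2.1
          · rw [hV', ← List.map_dropLast]
            refine hw.2.2.map_on ?_
            intro z hz z' hz' hfz
            have hzu : z ≠ u := by
              obtain ⟨e, he, hze⟩ := auxExistsEdge w hw.1 (List.mem_of_mem_dropLast hz)
              exact fun h => hU ⟨e, (hmem e).1 he, h ▸ hze⟩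
            have hzu' : z' ≠ u := by
              obtain ⟨e, he, hze⟩ := auxExistsEdge w hw.1 (List.mem_of_mem_dropLast hz')
              exact fun h => hU ⟨e, (hmem e).1 he, h ▸ hze⟩
            by_cases h1 : z = v <;> by_cases h2 : z' = v
            · rw [h1, h2]
            · rw [h1, hfv, hfid z' h2] at hfz
              exact absurd hfz.symm hzu'
            · rw [hfid z h1, h2, hfv] at hfz
              exact absurd hfz hzu
            · rwa [hfid z h1, hfid z' h2] at hfz
          · ext e
            show e ∈ w'.edgeList ↔ e ∈ C
            rw [hE']
            exact hmem e
        exact Or.inl ⟨hcyc, (hbal C).2 ⟨hcyc, fun h => hU h.1⟩⟩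
    · -- no v-edge: identity transfer, balanced cycle
      have hg : ∀ e ∈ w.edgeList, Ω'.toMultigraph.inc e = Sym2.map (fun z => z) (G.inc e) := by
        intro e he
        rw [Sym2.map_id', id_eq]
        exact hfix (fun h => hV ⟨e, (hmem e).1 he, h⟩)
      obtain ⟨w', hE', hV'⟩ := auxMap (fun z => z) w hg
      have hcyc : Ω'.toMultigraph.IsCycleSet C := by
        refine ⟨p, w', ⟨?_, ?_, ?_⟩, ?_⟩
        · rw [hE']; exact hw.1
        · rw [hE']; exact hw.2.1
        · rw [hV', List.map_id' w.vertList]; exact hw.2.2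
        · ext e
          show e ∈ w'.edgeList ↔ e ∈ C
          rw [hE']
          exact hmem e
      exact Or.inl ⟨hcyc, (hbal C).2 ⟨hcyc, fun h => hV h.2⟩⟩
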